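/- Uniform bound for the Kac–Rice kernel: There is an absolute constant C₁ > 0 with the following property. For every integer N ≥ 2, every pair of linearly independent vectors b₁, b₂ ∈ ℝ^N, and every ε with 0 < ε ≤ ‖b₁‖, one has (1/(2ε)) ∫_{ℝ^N} 1_{[−ε,ε]}(⟨b₁,a⟩) · |⟨b₂,a⟩| dγ_N(a) ≤ C₁ · ‖b₂‖/‖b₁‖. -/

import Mathlib

open MeasureTheory Real ENNReal

/-- The standard Gaussian measure on `ℝ^N`. -/
noncomputable def gaussianN (N : ℕ) : Measure (EuclideanSpace ℝ (Fin N)) :=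
  volume.withDensity fun a => ENNReal.ofReal ((2 * π) ^ (-(N : ℝ) / 2) * Real.exp (-‖a‖ ^ 2 / 2))


noncomputable def phi1 (t : ℝ) : ℝ := (2 * π) ^ (-(1:ℝ) / 2) * Real.exp (-t ^ 2 / 2)

lemma twoPiPos : (0:ℝ) < 2 * π := by positivity

lemma phi1_nonneg (t : ℝ) : 0 ≤ phi1 t := by
  unfold phi1; positivity

lemma cont_phi1 : Continuous phi1 := by
  unfold phi1; continuity

lemma meas_phi1 : Measurable fun t : ℝ => ENNReal.ofReal (phi1 t) :=
  cont_phi1.measurable.ennreal_ofReal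

lemma integrable_phi1 : Integrable phi1 := by
  have h : Integrable (fun t : ℝ => Real.exp (-(1/2 : ℝ) * t ^ 2)) := integrable_exp_neg_mul_sq (by norm_num)
  have := h.const_mul ((2 * π) ^ (-(1:ℝ) / 2))
  refine this.congr (ae_of_all _ fun t => ?_)
  unfold phi1
  ring_nf

lemma integral_phi1 : ∫ t, phi1 t = 1 := by
  unfold phi1
  rw [MeasureTheory.integral_const_mul]
  have h : (fun t : ℝ => Real.exp (-t ^ 2 / 2)) = fun t : ℝ => Real.exp (-(1/2 : ℝ) * t ^ 2) := by
    funext t; ring_nf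
  rw [h, integral_gaussian]
  have h2 : π / (1/2 : ℝ) = 2 * π := by ring
  rw [h2, Real.sqrt_eq_rpow, ← Real.rpow_add twoPiPos]
  norm_num

lemma lintegral_phi1 : ∫⁻ t, ENNReal.ofReal (phi1 t) = 1 := by
  rw [← ofReal_integral_eq_lintegral_ofReal integrable_phi1 (ae_of_all _ phi1_nonneg),
    integral_phi1, ENNReal.ofReal_one]

lemma rpow_neg_half_le : (2 * π) ^ (-(1:ℝ) / 2) ≤ 1/2 := by
  have h4 : (4:ℝ) ≤ 2 * π := by nlinarith [Real.two_le_pi]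
  have h1 : (2:ℝ) ≤ (2 * π) ^ ((1:ℝ) / 2) := by
    rw [← Real.sqrt_eq_rpow]
    nlinarith [Real.sq_sqrt (le_of_lt twoPiPos), Real.sqrt_nonneg (2*π),
      sq_nonneg (Real.sqrt (2*π) - 2)]
  have hpos : (0:ℝ) < (2 * π) ^ ((1:ℝ) / 2) := Real.rpow_pos_of_pos twoPiPos _
  rw [show -(1:ℝ)/2 = -((1:ℝ)/2) by ring, Real.rpow_neg (le_of_lt twoPiPos)]
  rw [inv_le_comm₀ hpos (by norm_num)]
  linarith

lemma phi1_le_half (t : ℝ) : phi1 t ≤ 1/2 := by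
  unfold phi1
  have h1 : Real.exp (-t ^ 2 / 2) ≤ 1 := by
    rw [Real.exp_le_one_iff]; nlinarith [sq_nonneg t]
  calc (2 * π) ^ (-(1:ℝ) / 2) * Real.exp (-t ^ 2 / 2) ≤ (1/2) * 1 := by
        apply mul_le_mul rpow_neg_half_le h1 (Real.exp_nonneg _) (by norm_num)
    _ = 1/2 := by ring

lemma abs_mul_phi1_le (t : ℝ) : |t| * phi1 t ≤ (1/2) * Real.exp (-t^2/4) := by
  unfold phi1
  have h1 : |t| ≤ Real.exp (t^2/4) := by
    have h2 : t^2/4 + 1 ≤ Real.exp (t^2/4) := Real.add_one_le_exp _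
    nlinarith [sq_nonneg (|t| - 2), sq_abs t]
  have h2 : |t| * Real.exp (-t ^ 2 / 2) ≤ Real.exp (-t^2/4) := by
    have : Real.exp (-t^2/2) = Real.exp (-t^2/4) * Real.exp (-t^2/4) := by
      rw [← Real.exp_add]; ring_nf
    rw [this, ← mul_assoc]
    have h3 : |t| * Real.exp (-t^2/4) ≤ 1 := by
      have := Real.exp_neg (t^2/4)
      have h4 : Real.exp (-t^2/4) = (Real.exp (t^2/4))⁻¹ := by
        rw [← Real.exp_neg]; ring_nf
      rw [h4]
      rw [mul_inv_le_iff₀ (Real.exp_pos _)]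
      simpa using h1
    calc |t| * Real.exp (-t^2/4) * Real.exp (-t^2/4) ≤ 1 * Real.exp (-t^2/4) :=
      mul_le_mul_of_nonneg_right h3 (Real.exp_nonneg _)
      _ = Real.exp (-t^2/4) := one_mul _
  calc |t| * ((2 * π) ^ (-(1:ℝ) / 2) * Real.exp (-t ^ 2 / 2))
      = |t| * Real.exp (-t^2/2) * (2*π) ^ (-(1:ℝ)/2) := by ring
    _ ≤ Real.exp (-t^2/4) * (1/2) := by
        apply mul_le_mul h2 rpow_neg_half_le (by positivity) (Real.exp_nonneg _)
    _ = (1/2) * Real.exp (-t^2/4) := by ring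

lemma lintegral_abs_phi1 : ∫⁻ t, ENNReal.ofReal (|t| * phi1 t) ≤ ENNReal.ofReal 2 := by
  have hmono : ∀ t : ℝ, ENNReal.ofReal (|t| * phi1 t) ≤ ENNReal.ofReal ((1/2) * Real.exp (-t^2/4)) :=
    fun t => ENNReal.ofReal_le_ofReal (by
      exact abs_mul_phi1_le t)
  have hint : Integrable (fun t : ℝ => (1/2 : ℝ) * Real.exp (-t^2/4)) := by
    have h : Integrable (fun t : ℝ => Real.exp (-(1/4 : ℝ) * t ^ 2)) :=
      integrable_exp_neg_mul_sq (by norm_num)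
    refine (h.const_mul (1/2 : ℝ)).congr (ae_of_all _ fun t => ?_)
    ring_nf
  calc ∫⁻ t, ENNReal.ofReal (|t| * phi1 t)
      ≤ ∫⁻ t, ENNReal.ofReal ((1/2) * Real.exp (-t^2/4)) := lintegral_mono hmono
    _ = ENNReal.ofReal (∫ t, (1/2) * Real.exp (-t^2/4)) := by
        rw [ofReal_integral_eq_lintegral_ofReal hint (ae_of_all _ fun t => by positivity)]
    _ ≤ ENNReal.ofReal 2 := by
        apply ENNReal.ofReal_le_ofReal
        rw [MeasureTheory.integral_const_mul]
        have h : (fun t : ℝ => Real.exp (-t ^ 2 / 4)) = fun t : ℝ => Real.exp (-(1/4 : ℝ) * t ^ 2) := by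
          funext t; ring_nf
        rw [h, integral_gaussian]
        have h2 : π / (1/4 : ℝ) = 4 * π := by ring
        rw [h2]
        have h3 : Real.sqrt (4 * π) ≤ 4 := by
          have : (4:ℝ) = Real.sqrt 16 := by
            rw [show (16:ℝ) = 4^2 by norm_num, Real.sqrt_sq (by norm_num)]
          rw [this]
          exact Real.sqrt_le_sqrt (by nlinarith [Real.pi_le_four])
        linarith

lemma marginal (n : ℕ) (g : ℝ → ℝ → ℝ≥0∞) (hg : Measurable (Function.uncurry g)) :
    ∫⁻ y : Fin (n+2) → ℝ, g (y 0) (y 1) * ∏ i, ENNReal.ofReal (phi1 (y i))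
      = ∫⁻ p : ℝ × ℝ, g p.1 p.2 * (ENNReal.ofReal (phi1 p.1) * ENNReal.ofReal (phi1 p.2)) := by
  induction n with
  | zero =>
    rw [← (MeasureTheory.volume_preserving_finTwoArrow ℝ).lintegral_comp_emb
      (MeasurableEquiv.finTwoArrow).measurableEmbedding
      (fun p : ℝ × ℝ => g p.1 p.2 * (ENNReal.ofReal (phi1 p.1) * ENNReal.ofReal (phi1 p.2)))]
    refine lintegral_congr fun y => ?_
    simp [Fin.prod_univ_two]
  | succ n ih =>
    have hMP := (MeasureTheory.volume_preserving_piFinSuccAbove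
      (fun _ : Fin (n+3) => ℝ) (Fin.last (n+2))).symm
    rw [← hMP.lintegral_comp_emb
      (MeasurableEquiv.piFinSuccAbove (fun _ : Fin (n+3) => ℝ) (Fin.last (n+2))).symm.measurableEmbedding
      (fun y : Fin (n+3) → ℝ => g (y 0) (y 1) * ∏ i, ENNReal.ofReal (phi1 (y i)))]
    have step : ∀ q : ℝ × (Fin (n+2) → ℝ),
        (fun y : Fin (n+3) → ℝ => g (y 0) (y 1) * ∏ i, ENNReal.ofReal (phi1 (y i)))
          ((MeasurableEquiv.piFinSuccAbove (fun _ : Fin (n+3) => ℝ) (Fin.last (n+2))).symm q)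
        = ENNReal.ofReal (phi1 q.1)
          * (g (q.2 0) (q.2 1) * ∏ i, ENNReal.ofReal (phi1 (q.2 i))) := by
      rintro ⟨t, z⟩
      have hsymm : (MeasurableEquiv.piFinSuccAbove (fun _ : Fin (n+3) => ℝ)
          (Fin.last (n+2))).symm (t, z) = Fin.snoc z t := by
        simp [MeasurableEquiv.piFinSuccAbove, Fin.insertNthEquiv, Fin.insertNth_last]
      rw [hsymm]
      have h0 : (Fin.snoc z t : Fin (n+2+1) → ℝ) 0 = z 0 := by
        rw [show (0 : Fin (n+2+1)) = Fin.castSucc 0 from (Fin.castSucc_zero' ..).symm,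
          Fin.snoc_castSucc]
      have h1 : (Fin.snoc z t : Fin (n+2+1) → ℝ) 1 = z 1 := by
        rw [show (1 : Fin (n+2+1)) = Fin.castSucc 1 from rfl, Fin.snoc_castSucc]
      have hprod : (∏ i, ENNReal.ofReal (phi1 ((Fin.snoc z t : Fin (n+2+1) → ℝ) i)))
          = (∏ i, ENNReal.ofReal (phi1 (z i))) * ENNReal.ofReal (phi1 t) := by
        rw [Fin.prod_univ_castSucc]
        congr 1
        · exact Finset.prod_congr rfl fun i _ => by rw [Fin.snoc_castSucc]
        · rw [Fin.snoc_last]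
      show g ((Fin.snoc z t : Fin (n+2+1) → ℝ) 0) ((Fin.snoc z t : Fin (n+2+1) → ℝ) 1)
          * (∏ i, ENNReal.ofReal (phi1 ((Fin.snoc z t : Fin (n+2+1) → ℝ) i)))
        = ENNReal.ofReal (phi1 t) * (g (z 0) (z 1) * ∏ i, ENNReal.ofReal (phi1 (z i)))
      rw [h0, h1, hprod]
      ring
    rw [lintegral_congr step]
    have hmeas2 : Measurable fun z : Fin (n+2) → ℝ =>
        g (z 0) (z 1) * ∏ i, ENNReal.ofReal (phi1 (z i)) := by
      apply Measurable.mul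
      · have hpair : Measurable fun z : Fin (n+2) → ℝ => (z 0, z 1) :=
          (measurable_pi_apply 0).prodMk (measurable_pi_apply 1)
        exact hg.comp hpair
      · exact Finset.measurable_prod _ fun i _ => meas_phi1.comp (measurable_pi_apply i)
    rw [Measure.volume_eq_prod,
      lintegral_prod_mul meas_phi1.aemeasurable hmeas2.aemeasurable, lintegral_phi1, one_mul]
    exact ih


lemma dim2_bound (r ε c₁ c₂ : ℝ) (hr : 0 < r) (hε : 0 < ε) :
    ∫⁻ p : ℝ × ℝ, ENNReal.ofReal
        (Set.indicator (Set.Icc (-ε) ε) (fun _ => (1:ℝ)) (r * p.1) * |c₁ * p.1 + c₂ * p.2|)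
      * (ENNReal.ofReal (phi1 p.1) * ENNReal.ofReal (phi1 p.2))
      ≤ ENNReal.ofReal ((ε/r) * (|c₁| * (ε/r) + 2 * |c₂|)) := by
  set δ := ε / r with hδdef
  have hδ : 0 < δ := div_pos hε hr
  set f₁ : ℝ → ℝ≥0∞ := fun s =>
    ENNReal.ofReal (Set.indicator (Set.Icc (-δ) δ) (fun _ => (1:ℝ)/2) s) with hf₁
  set f₂ : ℝ → ℝ≥0∞ := fun t =>
    ENNReal.ofReal (|c₁| * δ * phi1 t + |c₂| * (|t| * phi1 t)) with hf₂
  have hpt : ∀ p : ℝ × ℝ, ENNReal.ofReal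
        (Set.indicator (Set.Icc (-ε) ε) (fun _ => (1:ℝ)) (r * p.1) * |c₁ * p.1 + c₂ * p.2|)
      * (ENNReal.ofReal (phi1 p.1) * ENNReal.ofReal (phi1 p.2)) ≤ f₁ p.1 * f₂ p.2 := by
    rintro ⟨s, t⟩
    by_cases h : r * s ∈ Set.Icc (-ε) ε
    · have hs : s ∈ Set.Icc (-δ) δ := by
        have hs1 : s ≤ δ := (le_div_iff₀ hr).mpr (by nlinarith [h.2])
        have hs2 : -δ ≤ s := by
          have h' : (-ε)/r ≤ s := (div_le_iff₀ hr).mpr (by nlinarith [h.1])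
          rw [neg_div] at h'
          exact h'
        exact ⟨hs2, hs1⟩
      have habs : |s| ≤ δ := abs_le.mpr ⟨by linarith [hs.1], hs.2⟩
      rw [Set.indicator_of_mem h]
      have hmerge : ENNReal.ofReal ((1:ℝ) * |c₁ * s + c₂ * t|)
            * (ENNReal.ofReal (phi1 s) * ENNReal.ofReal (phi1 t))
          = ENNReal.ofReal (|c₁ * s + c₂ * t| * phi1 s * phi1 t) := by
        rw [one_mul, ← mul_assoc, ← ENNReal.ofReal_mul (abs_nonneg _),
          ← ENNReal.ofReal_mul (mul_nonneg (abs_nonneg _) (phi1_nonneg s))]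
      rw [hmerge, hf₁, hf₂]
      dsimp only
      rw [Set.indicator_of_mem hs, ← ENNReal.ofReal_mul (by norm_num)]
      apply ENNReal.ofReal_le_ofReal
      have h1 : |c₁ * s + c₂ * t| ≤ |c₁| * δ + |c₂| * |t| := by
        calc |c₁ * s + c₂ * t| ≤ |c₁ * s| + |c₂ * t| := abs_add_le _ _
          _ = |c₁| * |s| + |c₂| * |t| := by rw [abs_mul, abs_mul]
          _ ≤ |c₁| * δ + |c₂| * |t| := by
              have := mul_le_mul_of_nonneg_left habs (abs_nonneg c₁)
              linarith
      have h2 : phi1 s ≤ 1/2 := phi1_le_half s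
      have h3 : 0 ≤ phi1 t := phi1_nonneg t
      have h4 : 0 ≤ phi1 s := phi1_nonneg s
      calc |c₁ * s + c₂ * t| * phi1 s * phi1 t
          ≤ (|c₁| * δ + |c₂| * |t|) * (1/2) * phi1 t := by
            apply mul_le_mul_of_nonneg_right _ h3
            apply mul_le_mul h1 h2 h4
            positivity
        _ = 1/2 * (|c₁| * δ * phi1 t + |c₂| * (|t| * phi1 t)) := by ring
    · rw [Set.indicator_of_notMem h]
      simp
  calc ∫⁻ p : ℝ × ℝ, ENNReal.ofReal
        (Set.indicator (Set.Icc (-ε) ε) (fun _ => (1:ℝ)) (r * p.1) * |c₁ * p.1 + c₂ * p.2|)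
      * (ENNReal.ofReal (phi1 p.1) * ENNReal.ofReal (phi1 p.2))
      ≤ ∫⁻ p : ℝ × ℝ, f₁ p.1 * f₂ p.2 := lintegral_mono hpt
    _ = (∫⁻ s, f₁ s) * ∫⁻ t, f₂ t := by
        rw [Measure.volume_eq_prod]
        apply lintegral_prod_mul
        · apply Measurable.aemeasurable
          apply Measurable.ennreal_ofReal
          exact measurable_const.indicator measurableSet_Icc
        · apply Measurable.aemeasurable
          apply Measurable.ennreal_ofReal
          apply Measurable.add
          · exact (cont_phi1.measurable).const_mul _
          · exact ((measurable_abs.mul cont_phi1.measurable)).const_mul _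
    _ ≤ ENNReal.ofReal δ * ENNReal.ofReal (|c₁| * δ + 2 * |c₂|) := by
        apply mul_le_mul'
        · -- ∫ f₁ ≤ ofReal δ
          have : (fun s => f₁ s) = Set.indicator (Set.Icc (-δ) δ)
              (fun _ => ENNReal.ofReal ((1:ℝ)/2)) := by
            funext s
            rw [hf₁]
            by_cases hs : s ∈ Set.Icc (-δ) δ
            · simp only [Set.indicator_of_mem hs]
            · simp only [Set.indicator_of_notMem hs, ENNReal.ofReal_zero]
          rw [this, lintegral_indicator_const measurableSet_Icc, Real.volume_Icc,
            ← ENNReal.ofReal_mul (by norm_num)]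
          apply ENNReal.ofReal_le_ofReal
          nlinarith
        · -- ∫ f₂ ≤ ofReal (|c₁| δ + 2 |c₂|)
          have hsplit : (fun t => f₂ t) = fun t =>
              ENNReal.ofReal (|c₁| * δ) * ENNReal.ofReal (phi1 t)
                + ENNReal.ofReal |c₂| * ENNReal.ofReal (|t| * phi1 t) := by
            funext t
            simp only [hf₂]
            rw [ENNReal.ofReal_add (mul_nonneg (mul_nonneg (abs_nonneg c₁) hδ.le) (phi1_nonneg t))
                (mul_nonneg (abs_nonneg c₂) (mul_nonneg (abs_nonneg t) (phi1_nonneg t))),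
              ENNReal.ofReal_mul (mul_nonneg (abs_nonneg c₁) hδ.le),
              ENNReal.ofReal_mul (abs_nonneg c₂)]
          rw [hsplit, lintegral_add_left (meas_phi1.const_mul _), lintegral_const_mul _ meas_phi1,
            lintegral_const_mul _ (show Measurable fun t : ℝ => ENNReal.ofReal (|t| * phi1 t) from (measurable_abs.mul cont_phi1.measurable).ennreal_ofReal),
            lintegral_phi1, mul_one]
          calc ENNReal.ofReal (|c₁| * δ) + ENNReal.ofReal |c₂| * ∫⁻ t, ENNReal.ofReal (|t| * phi1 t)
              ≤ ENNReal.ofReal (|c₁| * δ) + ENNReal.ofReal |c₂| * ENNReal.ofReal 2 :=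
                add_le_add_right (mul_le_mul_right lintegral_abs_phi1 _) _
            _ = ENNReal.ofReal (|c₁| * δ + 2 * |c₂|) := by
                rw [← ENNReal.ofReal_mul (abs_nonneg _),
                  ← ENNReal.ofReal_add (mul_nonneg (abs_nonneg c₁) hδ.le) (by positivity)]
                ring_nf
    _ = ENNReal.ofReal (δ * (|c₁| * δ + 2 * |c₂|)) := by
        rw [← ENNReal.ofReal_mul (le_of_lt hδ)]


set_option maxHeartbeats 2000000 in
/-- Uniform bound for the Kac–Rice kernel. -/
theorem kac_rice_kernel_uniform_bound :
    ∃ C₁ : ℝ, 0 < C₁ ∧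
      ∀ (N : ℕ), 2 ≤ N → ∀ b₁ b₂ : EuclideanSpace ℝ (Fin N),
        LinearIndependent ℝ ![b₁, b₂] →
        ∀ ε : ℝ, 0 < ε → ε ≤ ‖b₁‖ →
          ENNReal.ofReal (1 / (2 * ε))
            * ∫⁻ a, ENNReal.ofReal
                (Set.indicator (Set.Icc (-ε) ε) (fun _ => (1 : ℝ)) (inner ℝ b₁ a)
                  * |(inner ℝ b₂ a : ℝ)|) ∂(gaussianN N)
            ≤ ENNReal.ofReal (C₁ * ‖b₂‖ / ‖b₁‖) := by
  classical
  refine ⟨2, by norm_num, ?_⟩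
  intro N hN b₁ b₂ hli ε hε hεb
  obtain ⟨m, rfl⟩ : ∃ m, N = m + 2 := ⟨N - 2, by omega⟩
  -- basic geometry
  have hb₁ : b₁ ≠ 0 := by
    intro h
    have := hli.ne_zero 0
    simp [h] at this
  have hb₁n : (0:ℝ) < ‖b₁‖ := norm_pos_iff.mpr hb₁
  set u₁ : EuclideanSpace ℝ (Fin (m+2)) := ‖b₁‖⁻¹ • b₁ with hu₁def
  set c₁ : ℝ := inner ℝ u₁ b₂ with hc₁def
  set w : EuclideanSpace ℝ (Fin (m+2)) := b₂ - c₁ • u₁ with hwdef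
  have hb₁u₁ : b₁ = ‖b₁‖ • u₁ := (smul_inv_smul₀ (ne_of_gt hb₁n) b₁).symm
  have hw : w ≠ 0 := by
    intro h
    have h2 : b₂ = (c₁ * ‖b₁‖⁻¹) • b₁ := by
      have h3 : b₂ = c₁ • u₁ := by
        have := sub_eq_zero.mp h
        exact this
      rw [h3, hu₁def, smul_smul]
    have h4 : (c₁ * ‖b₁‖⁻¹) • b₁ + (-1 : ℝ) • b₂ = 0 := by
      rw [← h2]; simp
    have := (LinearIndependent.pair_iff.mp hli (c₁ * ‖b₁‖⁻¹) (-1) h4).2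
    norm_num at this
  have hwn : (0:ℝ) < ‖w‖ := norm_pos_iff.mpr hw
  set u₂ : EuclideanSpace ℝ (Fin (m+2)) := ‖w‖⁻¹ • w with hu₂def
  set c₂ : ℝ := ‖w‖ with hc₂def
  have hwu₂ : w = c₂ • u₂ := (smul_inv_smul₀ (ne_of_gt hwn) w).symm
  have hu₁norm : ‖u₁‖ = 1 := norm_smul_inv_norm hb₁
  have hu₂norm : ‖u₂‖ = 1 := norm_smul_inv_norm hw
  have hu₁u₁ : (inner ℝ u₁ u₁ : ℝ) = 1 := by
    rw [real_inner_self_eq_norm_mul_norm, hu₁norm]; norm_num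
  have hu₂u₂ : (inner ℝ u₂ u₂ : ℝ) = 1 := by
    rw [real_inner_self_eq_norm_mul_norm, hu₂norm]; norm_num
  have hu₁w : (inner ℝ u₁ w : ℝ) = 0 := by
    rw [hwdef, inner_sub_right, real_inner_smul_right, hu₁u₁, ← hc₁def]
    ring
  have hu₁u₂ : (inner ℝ u₁ u₂ : ℝ) = 0 := by
    rw [hu₂def, real_inner_smul_right, hu₁w, mul_zero]
  have hu₂u₁ : (inner ℝ u₂ u₁ : ℝ) = 0 := by
    rw [real_inner_comm, hu₁u₂]
  have hb₂eq : b₂ = c₁ • u₁ + c₂ • u₂ := by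
    rw [← hwu₂, hwdef]; abel
  have hc₁abs : |c₁| ≤ ‖b₂‖ := by
    calc |c₁| = |(inner ℝ u₁ b₂ : ℝ)| := by rw [hc₁def]
      _ ≤ ‖u₁‖ * ‖b₂‖ := abs_real_inner_le_norm u₁ b₂
      _ = ‖b₂‖ := by rw [hu₁norm, one_mul]
  have hc₂abs : |c₂| ≤ ‖b₂‖ := by
    have h1 : (inner ℝ w b₂ : ℝ) = ‖w‖ ^ 2 := by
      have hb₂w : b₂ = w + c₁ • u₁ := by rw [hwdef]; abel
      have hwu₁ : (inner ℝ w u₁ : ℝ) = 0 := by rw [real_inner_comm]; exact hu₁w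
      have hww : (inner ℝ w w : ℝ) = ‖w‖ ^ 2 := real_inner_self_eq_norm_sq w
      conv_lhs => rw [hb₂w]
      rw [inner_add_right, real_inner_smul_right, hwu₁, hww]
      ring
    have h2 : (inner ℝ w b₂ : ℝ) ≤ ‖w‖ * ‖b₂‖ := real_inner_le_norm w b₂
    rw [abs_of_pos hwn] at *
    rw [hc₂def]
    nlinarith
  -- orthonormal basis extension
  have hcard : Module.finrank ℝ (EuclideanSpace ℝ (Fin (m+2))) = Fintype.card (Fin (m+2)) := by
    simp [finrank_euclideanSpace]
  have h01 : (0 : Fin (m+2)) ≠ 1 := by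
    simp [Fin.ext_iff]
  set v : Fin (m+2) → EuclideanSpace ℝ (Fin (m+2)) := fun i => if i = 0 then u₁ else u₂ with hvdef
  have hov : Orthonormal ℝ (Set.restrict ({0, 1} : Set (Fin (m+2))) v) := by
    rw [orthonormal_iff_ite]
    rintro ⟨i, hi⟩ ⟨j, hj⟩
    simp only [Set.mem_insert_iff, Set.mem_singleton_iff] at hi hj
    have hvi : ∀ x (hx : x = 0 ∨ x = 1), v x = if x = 0 then u₁ else u₂ := fun x _ => rfl
    rcases hi with rfl | rfl <;> rcases hj with rfl | rfl <;>
      simp only [Set.restrict_apply, hvdef, if_pos rfl, if_neg h01.symm, Subtype.mk.injEq] <;>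
      simp [Set.restrict, h01, h01.symm, hu₁u₁, hu₂u₂, hu₁u₂, hu₂u₁, hu₁norm, hu₂norm]
  obtain ⟨B, hB⟩ := hov.exists_orthonormalBasis_extension_of_card_eq hcard
  have hB0 : B 0 = u₁ := by
    have := hB 0 (by simp)
    simpa [hvdef] using this
  have hB1 : B 1 = u₂ := by
    have := hB 1 (by simp)
    simpa [hvdef, h01.symm] using this

  clear_value u₁ u₂ w c₁ c₂
  -- the 2D kernel
  set G : ℝ → ℝ → ℝ≥0∞ := fun s t => ENNReal.ofReal
    (Set.indicator (Set.Icc (-ε) ε) (fun _ => (1:ℝ)) (‖b₁‖ * s) * |c₁ * s + c₂ * t|) with hGdef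
  have hG : Measurable (Function.uncurry G) := by
    have huncurry : Function.uncurry G = fun p : ℝ × ℝ => ENNReal.ofReal
        (Set.indicator (Set.Icc (-ε) ε) (fun _ => (1:ℝ)) (‖b₁‖ * p.1)
          * |c₁ * p.1 + c₂ * p.2|) := rfl
    rw [huncurry]
    apply Measurable.ennreal_ofReal
    apply Measurable.mul
    · exact (measurable_const.indicator measurableSet_Icc).comp (measurable_fst.const_mul ‖b₁‖)
    · exact ((measurable_fst.const_mul c₁).add (measurable_snd.const_mul c₂)).abs
  have hinner : ∀ a : EuclideanSpace ℝ (Fin (m+2)),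
      ENNReal.ofReal (Set.indicator (Set.Icc (-ε) ε) (fun _ => (1:ℝ)) (inner ℝ b₁ a)
        * |(inner ℝ b₂ a : ℝ)|)
      = G (B.repr a 0) (B.repr a 1) := by
    intro a
    have h1 : (inner ℝ b₁ a : ℝ) = ‖b₁‖ * B.repr a 0 := by
      rw [B.repr_apply_apply, hB0]
      conv_lhs => rw [hb₁u₁]
      rw [real_inner_smul_left]
    have h2 : (inner ℝ b₂ a : ℝ) = c₁ * B.repr a 0 + c₂ * B.repr a 1 := by
      rw [B.repr_apply_apply, B.repr_apply_apply, hB0, hB1]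
      conv_lhs => rw [hb₂eq]
      rw [inner_add_left, real_inner_smul_left, real_inner_smul_left]
    rw [h1, h2]
  -- density measurability
  have hDmeas : Measurable fun x : EuclideanSpace ℝ (Fin (m+2)) =>
      ENNReal.ofReal ((2 * π) ^ (-((m+2:ℕ) : ℝ) / 2) * Real.exp (-‖x‖ ^ 2 / 2)) := by
    apply Measurable.ennreal_ofReal
    have h1 : Continuous fun x : EuclideanSpace ℝ (Fin (m+2)) => -‖x‖ ^ 2 / 2 :=
      ((continuous_norm.pow 2).neg).div_const 2
    exact (continuous_const.mul (Real.continuous_exp.comp h1)).measurable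
  -- Step 1: unfold the Gaussian measure
  have step1 : (∫⁻ a, ENNReal.ofReal
        (Set.indicator (Set.Icc (-ε) ε) (fun _ => (1:ℝ)) (inner ℝ b₁ a) * |(inner ℝ b₂ a : ℝ)|)
        ∂ gaussianN (m+2))
      = ∫⁻ a, ENNReal.ofReal ((2 * π) ^ (-((m+2:ℕ) : ℝ) / 2) * Real.exp (-‖a‖ ^ 2 / 2))
          * G (B.repr a 0) (B.repr a 1) ∂ volume := by
    unfold gaussianN
    rw [lintegral_withDensity_eq_lintegral_mul_non_measurable _ hDmeas
      (ae_of_all _ fun x => ENNReal.ofReal_lt_top)]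
    refine lintegral_congr fun a => ?_
    simp only [Pi.mul_apply]
    rw [hinner a]
  -- Step 2: rotate by the orthonormal basis
  have hemb : MeasurableEmbedding
      (⇑B.repr.symm : EuclideanSpace ℝ (Fin (m+2)) → EuclideanSpace ℝ (Fin (m+2))) :=
    B.repr.symm.toHomeomorph.measurableEmbedding
  have step2 : (∫⁻ a, ENNReal.ofReal ((2 * π) ^ (-((m+2:ℕ) : ℝ) / 2) * Real.exp (-‖a‖ ^ 2 / 2))
          * G (B.repr a 0) (B.repr a 1) ∂ volume)
      = ∫⁻ x, ENNReal.ofReal ((2 * π) ^ (-((m+2:ℕ) : ℝ) / 2) * Real.exp (-‖x‖ ^ 2 / 2))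
          * G (x 0) (x 1) ∂ (volume : Measure (EuclideanSpace ℝ (Fin (m+2)))) := by
    have hMP2 : MeasurePreserving (⇑B.repr.symm)
        (volume : Measure (EuclideanSpace ℝ (Fin (m+2))))
        (volume : Measure (EuclideanSpace ℝ (Fin (m+2)))) :=
      OrthonormalBasis.measurePreserving_repr_symm B
    rw [← hMP2.lintegral_comp_emb hemb
      (fun a => ENNReal.ofReal ((2 * π) ^ (-((m+2:ℕ) : ℝ) / 2) * Real.exp (-‖a‖ ^ 2 / 2))
          * G (B.repr a 0) (B.repr a 1))]
    refine lintegral_congr fun x => ?_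
    rw [B.repr.symm.norm_map, B.repr.apply_symm_apply]
  -- Step 3: move to the product space and factor the density
  have step3 : (∫⁻ x, ENNReal.ofReal ((2 * π) ^ (-((m+2:ℕ) : ℝ) / 2) * Real.exp (-‖x‖ ^ 2 / 2))
          * G (x 0) (x 1) ∂ (volume : Measure (EuclideanSpace ℝ (Fin (m+2)))))
      = ∫⁻ y : Fin (m+2) → ℝ, G (y 0) (y 1) * ∏ i, ENNReal.ofReal (phi1 (y i)) := by
    have hMP3 : MeasurePreserving (⇑(MeasurableEquiv.toLp 2 (Fin (m+2) → ℝ)))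
        (volume : Measure (Fin (m+2) → ℝ))
        (volume : Measure (EuclideanSpace ℝ (Fin (m+2)))) :=
      PiLp.volume_preserving_toLp (Fin (m+2))
    rw [← hMP3.lintegral_comp_emb
      (MeasurableEquiv.toLp 2 (Fin (m+2) → ℝ)).measurableEmbedding
      (fun x => ENNReal.ofReal ((2 * π) ^ (-((m+2:ℕ) : ℝ) / 2) * Real.exp (-‖x‖ ^ 2 / 2))
          * G (x 0) (x 1))]
    refine lintegral_congr fun y => ?_
    have happ : ∀ i, (MeasurableEquiv.toLp 2 (Fin (m+2) → ℝ)) y i = y i := fun i => rfl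
    have hnorm : ‖(MeasurableEquiv.toLp 2 (Fin (m+2) → ℝ)) y‖ ^ 2 = ∑ i, (y i) ^ 2 := by
      rw [EuclideanSpace.norm_eq, Real.sq_sqrt (by positivity)]
      refine Finset.sum_congr rfl fun i _ => ?_
      rw [happ, Real.norm_eq_abs, sq_abs]
    have hdens : (2 * π) ^ (-((m+2:ℕ) : ℝ) / 2)
          * Real.exp (-‖(MeasurableEquiv.toLp 2 (Fin (m+2) → ℝ)) y‖ ^ 2 / 2)
        = ∏ i, phi1 (y i) := by
      rw [hnorm]
      unfold phi1
      rw [Finset.prod_mul_distrib, Finset.prod_const, Finset.card_univ, Fintype.card_fin,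
        ← Real.exp_sum]
      congr 1
      · rw [← Real.rpow_natCast ((2 * π) ^ (-(1:ℝ)/2)) (m+2), ← Real.rpow_mul (le_of_lt twoPiPos)]
        congr 1
        push_cast
        ring
      · congr 1
        rw [← Finset.sum_div, ← Finset.sum_neg_distrib]
    rw [happ 0, happ 1, hdens, ENNReal.ofReal_prod_of_nonneg (fun i _ => phi1_nonneg (y i)),
      mul_comm]
  -- Step 4: marginalize
  have step4 : (∫⁻ y : Fin (m+2) → ℝ, G (y 0) (y 1) * ∏ i, ENNReal.ofReal (phi1 (y i)))
      = ∫⁻ p : ℝ × ℝ, G p.1 p.2 * (ENNReal.ofReal (phi1 p.1) * ENNReal.ofReal (phi1 p.2)) :=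
    marginal m G hG
  -- Step 5: the 2D bound
  have step5 : (∫⁻ p : ℝ × ℝ, G p.1 p.2
        * (ENNReal.ofReal (phi1 p.1) * ENNReal.ofReal (phi1 p.2)))
      ≤ ENNReal.ofReal ((ε/‖b₁‖) * (|c₁| * (ε/‖b₁‖) + 2 * |c₂|)) :=
    dim2_bound ‖b₁‖ ε c₁ c₂ hb₁n hε
  -- final arithmetic
  have hfrac : ε / ‖b₁‖ ≤ 1 := (div_le_one hb₁n).mpr hεb
  have hfracpos : 0 < ε / ‖b₁‖ := div_pos hε hb₁n
  have hreal : (1/(2*ε)) * ((ε/‖b₁‖) * (|c₁| * (ε/‖b₁‖) + 2 * |c₂|)) ≤ 2 * ‖b₂‖ / ‖b₁‖ := by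
    have hX : |c₁| * (ε/‖b₁‖) + 2 * |c₂| ≤ 4 * ‖b₂‖ := by
      have h1 : |c₁| * (ε/‖b₁‖) ≤ ‖b₂‖ * 1 :=
        mul_le_mul hc₁abs hfrac (le_of_lt hfracpos) (norm_nonneg _)
      linarith [h1, hc₂abs, norm_nonneg b₂]
    have heq : (1/(2*ε)) * ((ε/‖b₁‖) * (|c₁| * (ε/‖b₁‖) + 2 * |c₂|))
        = (|c₁| * (ε/‖b₁‖) + 2 * |c₂|) / (2 * ‖b₁‖) := by
      field_simp
    rw [heq]
    calc (|c₁| * (ε/‖b₁‖) + 2 * |c₂|) / (2 * ‖b₁‖) ≤ (4 * ‖b₂‖) / (2 * ‖b₁‖) := by gcongr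
      _ = 2 * ‖b₂‖ / ‖b₁‖ := by ring
  calc ENNReal.ofReal (1 / (2 * ε))
        * ∫⁻ a, ENNReal.ofReal
            (Set.indicator (Set.Icc (-ε) ε) (fun _ => (1 : ℝ)) (inner ℝ b₁ a)
              * |(inner ℝ b₂ a : ℝ)|) ∂(gaussianN (m+2))
      = ENNReal.ofReal (1 / (2 * ε)) * ∫⁻ p : ℝ × ℝ, G p.1 p.2
          * (ENNReal.ofReal (phi1 p.1) * ENNReal.ofReal (phi1 p.2)) := by
        rw [step1, step2, step3, step4]
    _ ≤ ENNReal.ofReal (1 / (2 * ε))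
          * ENNReal.ofReal ((ε/‖b₁‖) * (|c₁| * (ε/‖b₁‖) + 2 * |c₂|)) :=
        mul_le_mul_right step5 _
    _ = ENNReal.ofReal ((1/(2*ε)) * ((ε/‖b₁‖) * (|c₁| * (ε/‖b₁‖) + 2 * |c₂|))) :=
        (ENNReal.ofReal_mul (by positivity)).symm
    _ ≤ ENNReal.ofReal (2 * ‖b₂‖ / ‖b₁‖) := ENNReal.ofReal_le_ofReal hreal
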